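/- The 6-dimensional solvable Lie algebra g = (0, 12, 13, 14, 15, 16), i.e. with basis e^1,…,e^6 of g* satisfying de^1 = 0 and de^i = e^1 ∧ e^i for i = 2,…,6, admits no half-flat SU(3)-structure: there is no pair (ω, ψ⁺) forming an SU(3)-structure on g with dψ⁺ = 0 and d(ω∧ω) = 0. -/
import Mathlib

set_option maxHeartbeats 1600000
set_option maxRecDepth 8000

open ExteriorAlgebra Module

/-- The standard basis covectors `e^1, …, e^6` (indexed `0,…,5`), viewed as degree-one
elements of the exterior algebra over `g* ≃ ℝ⁶`. -/
noncomputable def e (i : Fin 6) : ExteriorAlgebra ℝ (Fin 6 → ℝ) :=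
  ι ℝ (Pi.single i 1)

/-- `(ω, ψ⁺)` is an SU(3)-structure on the 6-dimensional space `g*`: there is a basis
`η¹,…,η⁶` of `g*` with `ω = η¹∧η² + η³∧η⁴ + η⁵∧η⁶` and
`ψ⁺ = Re((η¹+iη²)∧(η³+iη⁴)∧(η⁵+iη⁶)) = η¹³⁵ - η¹⁴⁶ - η²³⁶ - η²⁴⁵`. -/
def IsSU3 (ω ψ : ExteriorAlgebra ℝ (Fin 6 → ℝ)) : Prop :=
  ∃ η : Basis (Fin 6) ℝ (Fin 6 → ℝ),
    ω = ι ℝ (η 0) * ι ℝ (η 1) + ι ℝ (η 2) * ι ℝ (η 3) + ι ℝ (η 4) * ι ℝ (η 5) ∧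
    ψ = ι ℝ (η 0) * ι ℝ (η 2) * ι ℝ (η 4) - ι ℝ (η 0) * ι ℝ (η 3) * ι ℝ (η 5)
      - ι ℝ (η 1) * ι ℝ (η 2) * ι ℝ (η 5) - ι ℝ (η 1) * ι ℝ (η 3) * ι ℝ (η 4)

lemma swap_ι (x y : Fin 6 → ℝ) : ι ℝ x * ι ℝ y = -(ι ℝ y * ι ℝ x) :=
  eq_neg_of_add_eq_zero_left (ι_add_mul_swap x y)

lemma comm2 (x y z : Fin 6 → ℝ) :
    (ι ℝ x * ι ℝ y) * ι ℝ z = ι ℝ z * (ι ℝ x * ι ℝ y) := by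
  rw [mul_assoc, swap_ι y z, mul_neg, ← mul_assoc, swap_ι x z, neg_mul, neg_neg, mul_assoc]

lemma alt_zero {n m : ℕ} {N : Type*} [AddCommGroup N] [Module ℝ N]
    (g : (Fin 6 → ℝ) [⋀^Fin n]→ₗ[ℝ] N) (η : Fin m → (Fin 6 → ℝ)) (v : Fin n → Fin m)
    (h : ¬ Function.Injective v) : g (fun t => η (v t)) = 0 := by
  obtain ⟨i, j, hv, hij⟩ := Function.not_injective_iff.mp h
  exact g.map_eq_zero_of_eq _ (congrArg η hv) hij

lemma alt_perm {n : ℕ} {N : Type*} [AddCommGroup N] [Module ℝ N]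
    (g : (Fin 6 → ℝ) [⋀^Fin n]→ₗ[ℝ] N) (η : Fin n → (Fin 6 → ℝ)) (v : Fin n → Fin n)
    (σ : Equiv.Perm (Fin n)) (h : ∀ t, v t = σ t) :
    g (fun t => η (v t)) = Equiv.Perm.sign σ • g η := by
  have : (fun t => η (v t)) = η ∘ σ := funext fun t => congrArg η (h t)
  rw [this, g.map_perm]

lemma det_eval_zero (η : Basis (Fin 6) ℝ (Fin 6 → ℝ)) (v : Fin 6 → Fin 6)
    (h : ¬ Function.Injective v) : η.det (fun t => η (v t)) = 0 :=
  alt_zero η.det (⇑η) v h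

lemma det_eval_sign (η : Basis (Fin 6) ℝ (Fin 6 → ℝ)) (v : Fin 6 → Fin 6)
    (σ : Equiv.Perm (Fin 6)) (h : ∀ t, v t = σ t) (s : ℝ)
    (hs : ((Equiv.Perm.sign σ : ℤ) : ℝ) = s) :
    η.det (fun t => η (v t)) = s := by
  rw [alt_perm η.det (⇑η) v σ h, Basis.det_self, ← hs, Units.smul_def]
  simp

lemma term5 (η : Fin 6 → (Fin 6 → ℝ)) (a b c d f : Fin 6) :
    ι ℝ (η a) * ((ι ℝ (η b) * ι ℝ (η c)) * (ι ℝ (η d) * ι ℝ (η f)))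
      = ιMulti ℝ 5 (fun t => η (![a,b,c,d,f] t)) := by
  rw [ιMulti_apply]
  simp [List.ofFn_succ, mul_assoc]

lemma exp9 {A : Type*} [Ring A] (x a b c : A) :
    x * ((a + b + c) * (a + b + c)) =
      x * (a * a) + x * (a * b) + x * (a * c) + x * (b * a) + x * (b * b)
        + x * (b * c) + x * (c * a) + x * (c * b) + x * (c * c) := by
  noncomm_ring

/-- The linear functional on the exterior algebra reading off (in degree 5) the
coefficient dual to the basis 5-form omitting `η j`. -/
noncomputable def L (η : Basis (Fin 6) ℝ (Fin 6 → ℝ)) (j : Fin 6) :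
    ExteriorAlgebra ℝ (Fin 6 → ℝ) →ₗ[ℝ] ℝ :=
  liftAlternating (fun n => match n with | 5 => η.det.curryLeft (η j) | _ => 0)

lemma hLj (η : Basis (Fin 6) ℝ (Fin 6 → ℝ)) (j : Fin 6) (u : Fin 5 → Fin 6) :
    L η j (ιMulti ℝ 5 (fun t => η (u t))) = η.det (fun t => η (Matrix.vecCons j u t)) := by
  rw [L, liftAlternating_apply_ιMulti]
  show η.det (Matrix.vecCons (η j) fun t => η (u t)) = _
  congr 1
  exact funext (Fin.cases rfl (fun i => rfl))

/-- The 6-dimensional solvable Lie algebra `(0, 12, 13, 14, 15, 16)`,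
i.e. with `de¹ = 0` and `deⁱ = e¹ ∧ eⁱ` for `i = 2,…,6`, admits no half-flat
SU(3)-structure: there is no SU(3)-structure `(ω, ψ⁺)` with `dψ⁺ = 0` and `d(ω∧ω) = 0`. -/
theorem stmt_5
    (d : ExteriorAlgebra ℝ (Fin 6 → ℝ) →ₗ[ℝ] ExteriorAlgebra ℝ (Fin 6 → ℝ))
    -- `d` is an antiderivation (Leibniz rule with respect to the grading)
    (hleib : ∀ (p : ℕ) (x : ExteriorAlgebra ℝ (Fin 6 → ℝ)),
      x ∈ (LinearMap.range (ι ℝ (M := Fin 6 → ℝ))) ^ p →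
      ∀ y, d (x * y) = d x * y + ((-1 : ℝ)) ^ p • (x * d y))
    -- structure equations of (0, 12, 13, 14, 15, 16)
    (h0 : d (e 0) = 0)
    (hi : ∀ i : Fin 6, i ≠ 0 → d (e i) = e 0 * e i) :
    ¬ ∃ ω ψ : ExteriorAlgebra ℝ (Fin 6 → ℝ),
        IsSU3 ω ψ ∧ d ψ = 0 ∧ d (ω * ω) = 0 := by
  rintro ⟨ω, ψ, ⟨η, hω, hψ⟩, hdψ, hdωω⟩
  -- Step A: from the Leibniz rule, `d(ω²) = 4 e⁰ ∧ ω²`, hence `e⁰ ∧ ω² = 0`.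
  have hde : ∀ i, d (e i) = e 0 * e i := by
    intro i
    by_cases h : i = 0
    · rw [h, h0, e, ι_sq_zero]
    · exact hi i h
  have hd1 : ∀ v : Fin 6 → ℝ, d (ι ℝ v) = e 0 * ι ℝ v := by
    intro v
    have hv : v = ∑ i, (v i • (Pi.single i (1:ℝ) : Fin 6 → ℝ)) := by
      ext j
      simp [Pi.single_apply]
    have hv2 : ι ℝ v = ∑ i, v i • e i := by
      conv_lhs => rw [hv]
      simp [e]
    rw [hv2, map_sum]
    simp only [map_smul, hde]
    rw [Finset.mul_sum]
    simp [mul_smul_comm]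
  have hmem1 : ∀ v : Fin 6 → ℝ, ι ℝ v ∈ (LinearMap.range (ι ℝ (M := Fin 6 → ℝ))) ^ 1 := by
    intro v; rw [pow_one]; exact ⟨v, rfl⟩
  have hd2 : ∀ x y : Fin 6 → ℝ,
      d (ι ℝ x * ι ℝ y) = e 0 * (ι ℝ x * ι ℝ y) + e 0 * (ι ℝ x * ι ℝ y) := by
    intro x y
    rw [hleib 1 (ι ℝ x) (hmem1 x) (ι ℝ y), hd1, hd1]
    have key : ι ℝ x * (e 0 * ι ℝ y) = -(e 0 * (ι ℝ x * ι ℝ y)) := by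
      simp only [e]
      rw [← mul_assoc, swap_ι x (Pi.single 0 1), neg_mul, mul_assoc]
    rw [key, mul_assoc]
    norm_num
  have hdω : d ω = e 0 * ω + e 0 * ω := by
    rw [hω, map_add, map_add, hd2, hd2, hd2]
    simp only [mul_add]
    abel
  have hmem2 : ω ∈ (LinearMap.range (ι ℝ (M := Fin 6 → ℝ))) ^ 2 := by
    rw [hω, pow_two]
    exact add_mem (add_mem (Submodule.mul_mem_mul ⟨_, rfl⟩ ⟨_, rfl⟩)
      (Submodule.mul_mem_mul ⟨_, rfl⟩ ⟨_, rfl⟩)) (Submodule.mul_mem_mul ⟨_, rfl⟩ ⟨_, rfl⟩)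
  have hcomm : ω * e 0 = e 0 * ω := by
    rw [hω, e]
    simp only [add_mul, mul_add, comm2]
  have h4 : (4:ℝ) • (e 0 * (ω * ω)) = 0 := by
    rw [← hdωω, hleib 2 ω hmem2 ω, hdω]
    rw [add_mul, mul_add, ← mul_assoc, ← mul_assoc, ← hcomm]
    rw [show ω * (e 0) * ω = e 0 * ω * ω from by rw [hcomm]]
    rw [mul_assoc]
    norm_num
    module
  have hE : e 0 * (ω * ω) = 0 := by
    rcases smul_eq_zero.mp h4 with h | h
    · norm_num at h
    · exact h
  -- Step B: expand `e⁰` in the basis `η` and `ω²` in basis 5-forms.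
  have hsum : (e 0 : ExteriorAlgebra ℝ (Fin 6 → ℝ))
      = ∑ k, η.repr (Pi.single 0 1) k • ι ℝ (η k) := by
    rw [e]
    conv_lhs => rw [← η.sum_repr (Pi.single 0 1)]
    rw [map_sum]
    simp
  rw [hsum, Finset.sum_mul] at hE
  simp only [smul_mul_assoc] at hE
  rw [Fin.sum_univ_six] at hE
  have hrow0 : ι ℝ (η 0) * (ω * ω) = ιMulti ℝ 5 (fun t => η (![0,2,3,4,5] t)) + ιMulti ℝ 5 (fun t => η (![0,4,5,2,3] t)) := by
    rw [hω, exp9]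
    rw [term5 η 0 0 1 0 1, term5 η 0 0 1 2 3, term5 η 0 0 1 4 5, term5 η 0 2 3 0 1, term5 η 0 2 3 2 3, term5 η 0 2 3 4 5, term5 η 0 4 5 0 1, term5 η 0 4 5 2 3, term5 η 0 4 5 4 5]
    rw [alt_zero _ η ![0,0,1,0,1] (by decide),
        alt_zero _ η ![0,0,1,2,3] (by decide),
        alt_zero _ η ![0,0,1,4,5] (by decide),
        alt_zero _ η ![0,2,3,0,1] (by decide),
        alt_zero _ η ![0,2,3,2,3] (by decide),
        alt_zero _ η ![0,4,5,0,1] (by decide),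
        alt_zero _ η ![0,4,5,4,5] (by decide)]
    abel
  have hrow1 : ι ℝ (η 1) * (ω * ω) = ιMulti ℝ 5 (fun t => η (![1,2,3,4,5] t)) + ιMulti ℝ 5 (fun t => η (![1,4,5,2,3] t)) := by
    rw [hω, exp9]
    rw [term5 η 1 0 1 0 1, term5 η 1 0 1 2 3, term5 η 1 0 1 4 5, term5 η 1 2 3 0 1, term5 η 1 2 3 2 3, term5 η 1 2 3 4 5, term5 η 1 4 5 0 1, term5 η 1 4 5 2 3, term5 η 1 4 5 4 5]
    rw [alt_zero _ η ![1,0,1,0,1] (by decide),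
        alt_zero _ η ![1,0,1,2,3] (by decide),
        alt_zero _ η ![1,0,1,4,5] (by decide),
        alt_zero _ η ![1,2,3,0,1] (by decide),
        alt_zero _ η ![1,2,3,2,3] (by decide),
        alt_zero _ η ![1,4,5,0,1] (by decide),
        alt_zero _ η ![1,4,5,4,5] (by decide)]
    abel
  have hrow2 : ι ℝ (η 2) * (ω * ω) = ιMulti ℝ 5 (fun t => η (![2,0,1,4,5] t)) + ιMulti ℝ 5 (fun t => η (![2,4,5,0,1] t)) := by
    rw [hω, exp9]
    rw [term5 η 2 0 1 0 1, term5 η 2 0 1 2 3, term5 η 2 0 1 4 5, term5 η 2 2 3 0 1, term5 η 2 2 3 2 3, term5 η 2 2 3 4 5, term5 η 2 4 5 0 1, term5 η 2 4 5 2 3, term5 η 2 4 5 4 5]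
    rw [alt_zero _ η ![2,0,1,0,1] (by decide),
        alt_zero _ η ![2,0,1,2,3] (by decide),
        alt_zero _ η ![2,2,3,0,1] (by decide),
        alt_zero _ η ![2,2,3,2,3] (by decide),
        alt_zero _ η ![2,2,3,4,5] (by decide),
        alt_zero _ η ![2,4,5,2,3] (by decide),
        alt_zero _ η ![2,4,5,4,5] (by decide)]
    abel
  have hrow3 : ι ℝ (η 3) * (ω * ω) = ιMulti ℝ 5 (fun t => η (![3,0,1,4,5] t)) + ιMulti ℝ 5 (fun t => η (![3,4,5,0,1] t)) := by
    rw [hω, exp9]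
    rw [term5 η 3 0 1 0 1, term5 η 3 0 1 2 3, term5 η 3 0 1 4 5, term5 η 3 2 3 0 1, term5 η 3 2 3 2 3, term5 η 3 2 3 4 5, term5 η 3 4 5 0 1, term5 η 3 4 5 2 3, term5 η 3 4 5 4 5]
    rw [alt_zero _ η ![3,0,1,0,1] (by decide),
        alt_zero _ η ![3,0,1,2,3] (by decide),
        alt_zero _ η ![3,2,3,0,1] (by decide),
        alt_zero _ η ![3,2,3,2,3] (by decide),
        alt_zero _ η ![3,2,3,4,5] (by decide),
        alt_zero _ η ![3,4,5,2,3] (by decide),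
        alt_zero _ η ![3,4,5,4,5] (by decide)]
    abel
  have hrow4 : ι ℝ (η 4) * (ω * ω) = ιMulti ℝ 5 (fun t => η (![4,0,1,2,3] t)) + ιMulti ℝ 5 (fun t => η (![4,2,3,0,1] t)) := by
    rw [hω, exp9]
    rw [term5 η 4 0 1 0 1, term5 η 4 0 1 2 3, term5 η 4 0 1 4 5, term5 η 4 2 3 0 1, term5 η 4 2 3 2 3, term5 η 4 2 3 4 5, term5 η 4 4 5 0 1, term5 η 4 4 5 2 3, term5 η 4 4 5 4 5]
    rw [alt_zero _ η ![4,0,1,0,1] (by decide),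
        alt_zero _ η ![4,0,1,4,5] (by decide),
        alt_zero _ η ![4,2,3,2,3] (by decide),
        alt_zero _ η ![4,2,3,4,5] (by decide),
        alt_zero _ η ![4,4,5,0,1] (by decide),
        alt_zero _ η ![4,4,5,2,3] (by decide),
        alt_zero _ η ![4,4,5,4,5] (by decide)]
    abel
  have hrow5 : ι ℝ (η 5) * (ω * ω) = ιMulti ℝ 5 (fun t => η (![5,0,1,2,3] t)) + ιMulti ℝ 5 (fun t => η (![5,2,3,0,1] t)) := by
    rw [hω, exp9]
    rw [term5 η 5 0 1 0 1, term5 η 5 0 1 2 3, term5 η 5 0 1 4 5, term5 η 5 2 3 0 1, term5 η 5 2 3 2 3, term5 η 5 2 3 4 5, term5 η 5 4 5 0 1, term5 η 5 4 5 2 3, term5 η 5 4 5 4 5]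
    rw [alt_zero _ η ![5,0,1,0,1] (by decide),
        alt_zero _ η ![5,0,1,4,5] (by decide),
        alt_zero _ η ![5,2,3,2,3] (by decide),
        alt_zero _ η ![5,2,3,4,5] (by decide),
        alt_zero _ η ![5,4,5,0,1] (by decide),
        alt_zero _ η ![5,4,5,2,3] (by decide),
        alt_zero _ η ![5,4,5,4,5] (by decide)]
    abel
  rw [hrow0, hrow1, hrow2, hrow3, hrow4, hrow5] at hE
  -- Step C: pair with the dual functionals `L η j` to conclude all coefficients vanish.
  have hc1 : η.repr (Pi.single 0 1) 1 = 0 := by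
    have hj := congrArg (L η 0) hE
    simp only [map_add, map_smul, map_zero] at hj
    rw [hLj η 0 ![0,2,3,4,5],
        hLj η 0 ![0,4,5,2,3],
        hLj η 0 ![1,2,3,4,5],
        hLj η 0 ![1,4,5,2,3],
        hLj η 0 ![2,0,1,4,5],
        hLj η 0 ![2,4,5,0,1],
        hLj η 0 ![3,0,1,4,5],
        hLj η 0 ![3,4,5,0,1],
        hLj η 0 ![4,0,1,2,3],
        hLj η 0 ![4,2,3,0,1],
        hLj η 0 ![5,0,1,2,3],
        hLj η 0 ![5,2,3,0,1]] at hj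
    rw [det_eval_sign η ![0,1,2,3,4,5] (1 : Equiv.Perm (Fin 6)) (by decide) (1)
          (by rw [show Equiv.Perm.sign (1 : Equiv.Perm (Fin 6)) = 1 from by decide]; norm_num),
        det_eval_sign η ![0,1,4,5,2,3] ((1 : Equiv.Perm (Fin 6)) * (Equiv.swap (2:Fin 6) 4 * Equiv.swap 3 5)) (by decide) (1)
          (by rw [show Equiv.Perm.sign ((1 : Equiv.Perm (Fin 6)) * (Equiv.swap (2:Fin 6) 4 * Equiv.swap 3 5)) = 1 from by decide]; norm_num),
        det_eval_zero η ![0,0,2,3,4,5] (by decide),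
        det_eval_zero η ![0,0,4,5,2,3] (by decide),
        det_eval_zero η ![0,2,0,1,4,5] (by decide),
        det_eval_zero η ![0,2,4,5,0,1] (by decide),
        det_eval_zero η ![0,3,0,1,4,5] (by decide),
        det_eval_zero η ![0,3,4,5,0,1] (by decide),
        det_eval_zero η ![0,4,0,1,2,3] (by decide),
        det_eval_zero η ![0,4,2,3,0,1] (by decide),
        det_eval_zero η ![0,5,0,1,2,3] (by decide),
        det_eval_zero η ![0,5,2,3,0,1] (by decide)] at hj
    simp only [smul_eq_mul] at hj
    linarith
  have hc0 : η.repr (Pi.single 0 1) 0 = 0 := by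
    have hj := congrArg (L η 1) hE
    simp only [map_add, map_smul, map_zero] at hj
    rw [hLj η 1 ![0,2,3,4,5],
        hLj η 1 ![0,4,5,2,3],
        hLj η 1 ![1,2,3,4,5],
        hLj η 1 ![1,4,5,2,3],
        hLj η 1 ![2,0,1,4,5],
        hLj η 1 ![2,4,5,0,1],
        hLj η 1 ![3,0,1,4,5],
        hLj η 1 ![3,4,5,0,1],
        hLj η 1 ![4,0,1,2,3],
        hLj η 1 ![4,2,3,0,1],
        hLj η 1 ![5,0,1,2,3],
        hLj η 1 ![5,2,3,0,1]] at hj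
    rw [det_eval_sign η ![1,0,2,3,4,5] (Equiv.swap (0:Fin 6) 1) (by decide) (-1)
          (by rw [show Equiv.Perm.sign (Equiv.swap (0:Fin 6) 1) = -1 from by decide]; norm_num),
        det_eval_sign η ![1,0,4,5,2,3] ((Equiv.swap (0:Fin 6) 1) * (Equiv.swap (2:Fin 6) 4 * Equiv.swap 3 5)) (by decide) (-1)
          (by rw [show Equiv.Perm.sign ((Equiv.swap (0:Fin 6) 1) * (Equiv.swap (2:Fin 6) 4 * Equiv.swap 3 5)) = -1 from by decide]; norm_num),
        det_eval_zero η ![1,1,2,3,4,5] (by decide),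
        det_eval_zero η ![1,1,4,5,2,3] (by decide),
        det_eval_zero η ![1,2,0,1,4,5] (by decide),
        det_eval_zero η ![1,2,4,5,0,1] (by decide),
        det_eval_zero η ![1,3,0,1,4,5] (by decide),
        det_eval_zero η ![1,3,4,5,0,1] (by decide),
        det_eval_zero η ![1,4,0,1,2,3] (by decide),
        det_eval_zero η ![1,4,2,3,0,1] (by decide),
        det_eval_zero η ![1,5,0,1,2,3] (by decide),
        det_eval_zero η ![1,5,2,3,0,1] (by decide)] at hj
    simp only [smul_eq_mul] at hj
    linarith
  have hc3 : η.repr (Pi.single 0 1) 3 = 0 := by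
    have hj := congrArg (L η 2) hE
    simp only [map_add, map_smul, map_zero] at hj
    rw [hLj η 2 ![0,2,3,4,5],
        hLj η 2 ![0,4,5,2,3],
        hLj η 2 ![1,2,3,4,5],
        hLj η 2 ![1,4,5,2,3],
        hLj η 2 ![2,0,1,4,5],
        hLj η 2 ![2,4,5,0,1],
        hLj η 2 ![3,0,1,4,5],
        hLj η 2 ![3,4,5,0,1],
        hLj η 2 ![4,0,1,2,3],
        hLj η 2 ![4,2,3,0,1],
        hLj η 2 ![5,0,1,2,3],
        hLj η 2 ![5,2,3,0,1]] at hj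
    rw [det_eval_sign η ![2,3,0,1,4,5] (Equiv.swap (0:Fin 6) 2 * Equiv.swap 1 3) (by decide) (1)
          (by rw [show Equiv.Perm.sign (Equiv.swap (0:Fin 6) 2 * Equiv.swap 1 3) = 1 from by decide]; norm_num),
        det_eval_sign η ![2,3,4,5,0,1] ((Equiv.swap (0:Fin 6) 2 * Equiv.swap 1 3) * (Equiv.swap (2:Fin 6) 4 * Equiv.swap 3 5)) (by decide) (1)
          (by rw [show Equiv.Perm.sign ((Equiv.swap (0:Fin 6) 2 * Equiv.swap 1 3) * (Equiv.swap (2:Fin 6) 4 * Equiv.swap 3 5)) = 1 from by decide]; norm_num),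
        det_eval_zero η ![2,0,2,3,4,5] (by decide),
        det_eval_zero η ![2,0,4,5,2,3] (by decide),
        det_eval_zero η ![2,1,2,3,4,5] (by decide),
        det_eval_zero η ![2,1,4,5,2,3] (by decide),
        det_eval_zero η ![2,2,0,1,4,5] (by decide),
        det_eval_zero η ![2,2,4,5,0,1] (by decide),
        det_eval_zero η ![2,4,0,1,2,3] (by decide),
        det_eval_zero η ![2,4,2,3,0,1] (by decide),
        det_eval_zero η ![2,5,0,1,2,3] (by decide),
        det_eval_zero η ![2,5,2,3,0,1] (by decide)] at hj
    simp only [smul_eq_mul] at hj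
    linarith
  have hc2 : η.repr (Pi.single 0 1) 2 = 0 := by
    have hj := congrArg (L η 3) hE
    simp only [map_add, map_smul, map_zero] at hj
    rw [hLj η 3 ![0,2,3,4,5],
        hLj η 3 ![0,4,5,2,3],
        hLj η 3 ![1,2,3,4,5],
        hLj η 3 ![1,4,5,2,3],
        hLj η 3 ![2,0,1,4,5],
        hLj η 3 ![2,4,5,0,1],
        hLj η 3 ![3,0,1,4,5],
        hLj η 3 ![3,4,5,0,1],
        hLj η 3 ![4,0,1,2,3],
        hLj η 3 ![4,2,3,0,1],
        hLj η 3 ![5,0,1,2,3],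
        hLj η 3 ![5,2,3,0,1]] at hj
    rw [det_eval_sign η ![3,2,0,1,4,5] (Equiv.swap (0:Fin 6) 3 * Equiv.swap 3 1 * Equiv.swap 1 2) (by decide) (-1)
          (by rw [show Equiv.Perm.sign (Equiv.swap (0:Fin 6) 3 * Equiv.swap 3 1 * Equiv.swap 1 2) = -1 from by decide]; norm_num),
        det_eval_sign η ![3,2,4,5,0,1] ((Equiv.swap (0:Fin 6) 3 * Equiv.swap 3 1 * Equiv.swap 1 2) * (Equiv.swap (2:Fin 6) 4 * Equiv.swap 3 5)) (by decide) (-1)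
          (by rw [show Equiv.Perm.sign ((Equiv.swap (0:Fin 6) 3 * Equiv.swap 3 1 * Equiv.swap 1 2) * (Equiv.swap (2:Fin 6) 4 * Equiv.swap 3 5)) = -1 from by decide]; norm_num),
        det_eval_zero η ![3,0,2,3,4,5] (by decide),
        det_eval_zero η ![3,0,4,5,2,3] (by decide),
        det_eval_zero η ![3,1,2,3,4,5] (by decide),
        det_eval_zero η ![3,1,4,5,2,3] (by decide),
        det_eval_zero η ![3,3,0,1,4,5] (by decide),
        det_eval_zero η ![3,3,4,5,0,1] (by decide),
        det_eval_zero η ![3,4,0,1,2,3] (by decide),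
        det_eval_zero η ![3,4,2,3,0,1] (by decide),
        det_eval_zero η ![3,5,0,1,2,3] (by decide),
        det_eval_zero η ![3,5,2,3,0,1] (by decide)] at hj
    simp only [smul_eq_mul] at hj
    linarith
  have hc5 : η.repr (Pi.single 0 1) 5 = 0 := by
    have hj := congrArg (L η 4) hE
    simp only [map_add, map_smul, map_zero] at hj
    rw [hLj η 4 ![0,2,3,4,5],
        hLj η 4 ![0,4,5,2,3],
        hLj η 4 ![1,2,3,4,5],
        hLj η 4 ![1,4,5,2,3],
        hLj η 4 ![2,0,1,4,5],
        hLj η 4 ![2,4,5,0,1],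
        hLj η 4 ![3,0,1,4,5],
        hLj η 4 ![3,4,5,0,1],
        hLj η 4 ![4,0,1,2,3],
        hLj η 4 ![4,2,3,0,1],
        hLj η 4 ![5,0,1,2,3],
        hLj η 4 ![5,2,3,0,1]] at hj
    rw [det_eval_sign η ![4,5,0,1,2,3] (Equiv.swap (0:Fin 6) 4 * Equiv.swap 4 2 * Equiv.swap 1 5 * Equiv.swap 5 3) (by decide) (1)
          (by rw [show Equiv.Perm.sign (Equiv.swap (0:Fin 6) 4 * Equiv.swap 4 2 * Equiv.swap 1 5 * Equiv.swap 5 3) = 1 from by decide]; norm_num),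
        det_eval_sign η ![4,5,2,3,0,1] ((Equiv.swap (0:Fin 6) 4 * Equiv.swap 4 2 * Equiv.swap 1 5 * Equiv.swap 5 3) * (Equiv.swap (2:Fin 6) 4 * Equiv.swap 3 5)) (by decide) (1)
          (by rw [show Equiv.Perm.sign ((Equiv.swap (0:Fin 6) 4 * Equiv.swap 4 2 * Equiv.swap 1 5 * Equiv.swap 5 3) * (Equiv.swap (2:Fin 6) 4 * Equiv.swap 3 5)) = 1 from by decide]; norm_num),
        det_eval_zero η ![4,0,2,3,4,5] (by decide),
        det_eval_zero η ![4,0,4,5,2,3] (by decide),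
        det_eval_zero η ![4,1,2,3,4,5] (by decide),
        det_eval_zero η ![4,1,4,5,2,3] (by decide),
        det_eval_zero η ![4,2,0,1,4,5] (by decide),
        det_eval_zero η ![4,2,4,5,0,1] (by decide),
        det_eval_zero η ![4,3,0,1,4,5] (by decide),
        det_eval_zero η ![4,3,4,5,0,1] (by decide),
        det_eval_zero η ![4,4,0,1,2,3] (by decide),
        det_eval_zero η ![4,4,2,3,0,1] (by decide)] at hj
    simp only [smul_eq_mul] at hj
    linarith
  have hc4 : η.repr (Pi.single 0 1) 4 = 0 := by
    have hj := congrArg (L η 5) hE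
    simp only [map_add, map_smul, map_zero] at hj
    rw [hLj η 5 ![0,2,3,4,5],
        hLj η 5 ![0,4,5,2,3],
        hLj η 5 ![1,2,3,4,5],
        hLj η 5 ![1,4,5,2,3],
        hLj η 5 ![2,0,1,4,5],
        hLj η 5 ![2,4,5,0,1],
        hLj η 5 ![3,0,1,4,5],
        hLj η 5 ![3,4,5,0,1],
        hLj η 5 ![4,0,1,2,3],
        hLj η 5 ![4,2,3,0,1],
        hLj η 5 ![5,0,1,2,3],
        hLj η 5 ![5,2,3,0,1]] at hj
    rw [det_eval_sign η ![5,4,0,1,2,3] (Equiv.swap (0:Fin 6) 5 * Equiv.swap 5 3 * Equiv.swap 3 1 * Equiv.swap 1 4 * Equiv.swap 4 2) (by decide) (-1)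
          (by rw [show Equiv.Perm.sign (Equiv.swap (0:Fin 6) 5 * Equiv.swap 5 3 * Equiv.swap 3 1 * Equiv.swap 1 4 * Equiv.swap 4 2) = -1 from by decide]; norm_num),
        det_eval_sign η ![5,4,2,3,0,1] ((Equiv.swap (0:Fin 6) 5 * Equiv.swap 5 3 * Equiv.swap 3 1 * Equiv.swap 1 4 * Equiv.swap 4 2) * (Equiv.swap (2:Fin 6) 4 * Equiv.swap 3 5)) (by decide) (-1)
          (by rw [show Equiv.Perm.sign ((Equiv.swap (0:Fin 6) 5 * Equiv.swap 5 3 * Equiv.swap 3 1 * Equiv.swap 1 4 * Equiv.swap 4 2) * (Equiv.swap (2:Fin 6) 4 * Equiv.swap 3 5)) = -1 from by decide]; norm_num),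
        det_eval_zero η ![5,0,2,3,4,5] (by decide),
        det_eval_zero η ![5,0,4,5,2,3] (by decide),
        det_eval_zero η ![5,1,2,3,4,5] (by decide),
        det_eval_zero η ![5,1,4,5,2,3] (by decide),
        det_eval_zero η ![5,2,0,1,4,5] (by decide),
        det_eval_zero η ![5,2,4,5,0,1] (by decide),
        det_eval_zero η ![5,3,0,1,4,5] (by decide),
        det_eval_zero η ![5,3,4,5,0,1] (by decide),
        det_eval_zero η ![5,5,0,1,2,3] (by decide),
        det_eval_zero η ![5,5,2,3,0,1] (by decide)] at hj
    simp only [smul_eq_mul] at hj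
    linarith
  have hfin := η.sum_repr (Pi.single 0 1)
  rw [Fin.sum_univ_six, hc0, hc1, hc2, hc3, hc4, hc5] at hfin
  simp only [zero_smul, add_zero, zero_add] at hfin
  have h10 := congrFun hfin 0
  simp [Pi.single_apply] at h10
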